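/- For positive integers k₁, k₂ and parameters α₁ < α₂ < α₃, the deformed geodesic Hamiltonian H = φ(u₁)p_{u₁}²/(k₁²(u₁−u₂)) + φ(u₂)p_{u₂}²/(k₂²(u₂−u₁)) with φ(z) = (z−α₁)(z−α₂)(z−α₃), Poisson-commutes with I₂ = u₂φ(u₁)p_{u₁}²/(k₁²(u₂−u₁)) + u₁φ(u₂)p_{u₂}²/(k₂²(u₁−u₂)). -/

import Mathlib

/-- directional derivative along a line -/
lemma fderiv_dir (F : ℝ × ℝ × ℝ × ℝ → ℝ) (z e : ℝ × ℝ × ℝ × ℝ)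
    (hF : DifferentiableAt ℝ F z) :
    fderiv ℝ F z e = deriv (fun t : ℝ => F (z + t • e)) 0 := by
  have hline : HasDerivAt (fun t : ℝ => z + t • e) e 0 := by
    simpa using ((hasDerivAt_id (0 : ℝ)).smul_const e).const_add z
  have h0 : (fun t : ℝ => z + t • e) 0 = z := by simp
  have := hF.hasFDerivAt
  rw [← h0] at this
  have H := this.comp_hasDerivAt 0 hline
  have := H.deriv
  simp only [Function.comp, zero_smul, add_zero] at this
  exact this.symm

/-- master lemma: derivative of a term of the form
  (s+mt)·φ(w+nt)·P / (K(c+dt)) at t = 0 -/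
lemma master (s m w n P K c d a1 a2 a3 : ℝ) (hK : K ≠ 0) (hc : c ≠ 0) :
    HasDerivAt (fun t : ℝ =>
      (s + m * t) * (((w + n * t) - a1) * ((w + n * t) - a2) * ((w + n * t) - a3)) * P
        / (K * (c + d * t)))
      (((m * ((w - a1) * (w - a2) * (w - a3))
          + s * n * ((w - a2) * (w - a3) + (w - a1) * (w - a3) + (w - a1) * (w - a2))) * P * c
        - s * ((w - a1) * (w - a2) * (w - a3)) * P * d) / (K * c ^ 2)) 0 := by
  have hs : HasDerivAt (fun t : ℝ => s + m * t) m 0 := by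
    simpa using ((hasDerivAt_id (0 : ℝ)).const_mul m).const_add s
  have hw1 : HasDerivAt (fun t : ℝ => (w + n * t) - a1) n 0 := by
    simpa using (((hasDerivAt_id (0 : ℝ)).const_mul n).const_add w).sub_const a1
  have hw2 : HasDerivAt (fun t : ℝ => (w + n * t) - a2) n 0 := by
    simpa using (((hasDerivAt_id (0 : ℝ)).const_mul n).const_add w).sub_const a2
  have hw3 : HasDerivAt (fun t : ℝ => (w + n * t) - a3) n 0 := by
    simpa using (((hasDerivAt_id (0 : ℝ)).const_mul n).const_add w).sub_const a3
  have hden : HasDerivAt (fun t : ℝ => K * (c + d * t)) (K * d) 0 := by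
    simpa using (((hasDerivAt_id (0 : ℝ)).const_mul d).const_add c).const_mul K
  have hd0 : (fun t : ℝ => K * (c + d * t)) 0 ≠ 0 := by
    simpa using mul_ne_zero hK hc
  have H := ((hs.mul ((hw1.mul hw2).mul hw3)).mul_const P).div hden hd0
  simp only [Pi.mul_def, Pi.div_def] at H
  refine H.congr_deriv ?_
  simp only [mul_zero, add_zero]
  field_simp

/-- master lemma 2: derivative of C·(P+nt)²/(Kc) at t = 0 -/
lemma master2 (C P n K c : ℝ) :
    HasDerivAt (fun t : ℝ => C * (P + n * t) ^ 2 / (K * c)) (C * (2 * P * n) / (K * c)) 0 := by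
  have h : HasDerivAt (fun t : ℝ => (P + n * t) ^ 2) (2 * P * n) 0 := by
    have := (((hasDerivAt_id (0 : ℝ)).const_mul n).const_add P).pow 2
    refine this.congr_deriv ?_
    simp only [id_eq, mul_zero, add_zero]
    push_cast
    ring
  have H := (h.const_mul C).div_const (K * c)
  exact H

noncomputable def pb (F G : ℝ × ℝ × ℝ × ℝ → ℝ) (z : ℝ × ℝ × ℝ × ℝ) : ℝ :=
  fderiv ℝ F z (1, 0, 0, 0) * fderiv ℝ G z (0, 0, 1, 0)
  - fderiv ℝ F z (0, 0, 1, 0) * fderiv ℝ G z (1, 0, 0, 0)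
  + fderiv ℝ F z (0, 1, 0, 0) * fderiv ℝ G z (0, 0, 0, 1)
  - fderiv ℝ F z (0, 0, 0, 1) * fderiv ℝ G z (0, 1, 0, 0)

set_option maxHeartbeats 2000000 in
theorem stmt_16 (α₁ α₂ α₃ : ℝ) (h12 : α₁ < α₂) (h23 : α₂ < α₃)
    (k₁ k₂ : ℤ) (hk₁ : 1 ≤ k₁) (hk₂ : 1 ≤ k₂) :
    ∀ z : ℝ × ℝ × ℝ × ℝ, z.1 ≠ z.2.1 →
      pb (fun z => (z.1 - α₁) * (z.1 - α₂) * (z.1 - α₃) * z.2.2.1 ^ 2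
              / ((k₁ : ℝ) ^ 2 * (z.1 - z.2.1))
            + (z.2.1 - α₁) * (z.2.1 - α₂) * (z.2.1 - α₃) * z.2.2.2 ^ 2
              / ((k₂ : ℝ) ^ 2 * (z.2.1 - z.1)))
         (fun z => z.2.1 * ((z.1 - α₁) * (z.1 - α₂) * (z.1 - α₃)) * z.2.2.1 ^ 2
              / ((k₁ : ℝ) ^ 2 * (z.2.1 - z.1))
            + z.1 * ((z.2.1 - α₁) * (z.2.1 - α₂) * (z.2.1 - α₃)) * z.2.2.2 ^ 2
              / ((k₂ : ℝ) ^ 2 * (z.1 - z.2.1))) z = 0 := by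
  intro z hz
  obtain ⟨u, v, p, q⟩ := z
  have hune : u ≠ v := hz
  have hk1' : (k₁ : ℝ) ≠ 0 := by exact_mod_cast (by omega : k₁ ≠ 0)
  have hk2' : (k₂ : ℝ) ≠ 0 := by exact_mod_cast (by omega : k₂ ≠ 0)
  have hk1sq : ((k₁ : ℝ) ^ 2) ≠ 0 := pow_ne_zero 2 hk1'
  have hk2sq : ((k₂ : ℝ) ^ 2) ≠ 0 := pow_ne_zero 2 hk2'
  have huv : (u - v) ≠ 0 := sub_ne_zero.mpr hune
  have hvu : (v - u) ≠ 0 := sub_ne_zero.mpr hune.symm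
  have hd1 : DifferentiableAt ℝ (fun y : ℝ × ℝ × ℝ × ℝ => (y.1 - α₁) * (y.1 - α₂) * (y.1 - α₃) * y.2.2.1 ^ 2) (u, v, p, q) := by fun_prop
  have hd2 : DifferentiableAt ℝ (fun y : ℝ × ℝ × ℝ × ℝ => (k₁ : ℝ) ^ 2 * (y.1 - y.2.1)) (u, v, p, q) := by fun_prop
  have hd3 : DifferentiableAt ℝ (fun y : ℝ × ℝ × ℝ × ℝ => (y.2.1 - α₁) * (y.2.1 - α₂) * (y.2.1 - α₃) * y.2.2.2 ^ 2) (u, v, p, q) := by fun_prop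
  have hd4 : DifferentiableAt ℝ (fun y : ℝ × ℝ × ℝ × ℝ => (k₂ : ℝ) ^ 2 * (y.2.1 - y.1)) (u, v, p, q) := by fun_prop
  have hd5 : DifferentiableAt ℝ (fun y : ℝ × ℝ × ℝ × ℝ => y.2.1 * ((y.1 - α₁) * (y.1 - α₂) * (y.1 - α₃)) * y.2.2.1 ^ 2) (u, v, p, q) := by fun_prop
  have hd6 : DifferentiableAt ℝ (fun y : ℝ × ℝ × ℝ × ℝ => (k₁ : ℝ) ^ 2 * (y.2.1 - y.1)) (u, v, p, q) := by fun_prop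
  have hd7 : DifferentiableAt ℝ (fun y : ℝ × ℝ × ℝ × ℝ => y.1 * ((y.2.1 - α₁) * (y.2.1 - α₂) * (y.2.1 - α₃)) * y.2.2.2 ^ 2) (u, v, p, q) := by fun_prop
  have hd8 : DifferentiableAt ℝ (fun y : ℝ × ℝ × ℝ × ℝ => (k₂ : ℝ) ^ 2 * (y.1 - y.2.1)) (u, v, p, q) := by fun_prop
  have hFd : DifferentiableAt ℝ (fun z : ℝ × ℝ × ℝ × ℝ => (z.1 - α₁) * (z.1 - α₂) * (z.1 - α₃) * z.2.2.1 ^ 2 / ((k₁ : ℝ) ^ 2 * (z.1 - z.2.1)) + (z.2.1 - α₁) * (z.2.1 - α₂) * (z.2.1 - α₃) * z.2.2.2 ^ 2 / ((k₂ : ℝ) ^ 2 * (z.2.1 - z.1))) (u, v, p, q) := by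
    simp only [div_eq_mul_inv]
    exact (hd1.mul (hd2.inv (mul_ne_zero hk1sq huv))).add
      (hd3.mul (hd4.inv (mul_ne_zero hk2sq hvu)))
  have hGd : DifferentiableAt ℝ (fun z : ℝ × ℝ × ℝ × ℝ => z.2.1 * ((z.1 - α₁) * (z.1 - α₂) * (z.1 - α₃)) * z.2.2.1 ^ 2 / ((k₁ : ℝ) ^ 2 * (z.2.1 - z.1)) + z.1 * ((z.2.1 - α₁) * (z.2.1 - α₂) * (z.2.1 - α₃)) * z.2.2.2 ^ 2 / ((k₂ : ℝ) ^ 2 * (z.1 - z.2.1))) (u, v, p, q) := by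
    simp only [div_eq_mul_inv]
    exact (hd5.mul (hd6.inv (mul_ne_zero hk1sq hvu))).add
      (hd7.mul (hd8.inv (mul_ne_zero hk2sq huv)))
  have hfunF1 : (fun t : ℝ => (fun z : ℝ × ℝ × ℝ × ℝ => (z.1 - α₁) * (z.1 - α₂) * (z.1 - α₃) * z.2.2.1 ^ 2 / ((k₁ : ℝ) ^ 2 * (z.1 - z.2.1)) + (z.2.1 - α₁) * (z.2.1 - α₂) * (z.2.1 - α₃) * z.2.2.2 ^ 2 / ((k₂ : ℝ) ^ 2 * (z.2.1 - z.1))) ((u, v, p, q) + t • ((1:ℝ), (0:ℝ), (0:ℝ), (0:ℝ)))) = (fun t : ℝ =>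
      (1 + 0 * t) * (((u + 1 * t) - α₁) * ((u + 1 * t) - α₂) * ((u + 1 * t) - α₃)) * (p ^ 2) / (((k₁ : ℝ) ^ 2) * ((u - v) + 1 * t))
      + (1 + 0 * t) * (((v + 0 * t) - α₁) * ((v + 0 * t) - α₂) * ((v + 0 * t) - α₃)) * (q ^ 2) / (((k₂ : ℝ) ^ 2) * ((v - u) + (-1) * t))) := by
    funext t
    simp only [Prod.smul_mk, Prod.mk_add_mk, smul_eq_mul]
    ring
  have HF1 := (master 1 0 u 1 (p ^ 2) ((k₁ : ℝ) ^ 2) (u - v) 1 α₁ α₂ α₃ hk1sq huv).add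
    (master 1 0 v 0 (q ^ 2) ((k₂ : ℝ) ^ 2) (v - u) (-1) α₁ α₂ α₃ hk2sq hvu)
  have vF1 : ((0 * ((u - α₁) * (u - α₂) * (u - α₃)) + 1 * 1 * ((u - α₂) * (u - α₃) + (u - α₁) * (u - α₃) + (u - α₁) * (u - α₂))) * (p ^ 2) * (u - v) - 1 * ((u - α₁) * (u - α₂) * (u - α₃)) * (p ^ 2) * 1) / (((k₁ : ℝ) ^ 2) * (u - v) ^ 2)
      + ((0 * ((v - α₁) * (v - α₂) * (v - α₃)) + 1 * 0 * ((v - α₂) * (v - α₃) + (v - α₁) * (v - α₃) + (v - α₁) * (v - α₂))) * (q ^ 2) * (v - u) - 1 * ((v - α₁) * (v - α₂) * (v - α₃)) * (q ^ 2) * (-1)) / (((k₂ : ℝ) ^ 2) * (v - u) ^ 2)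
      = (((k₂ : ℝ) ^ 2) * ((0 * ((u - α₁) * (u - α₂) * (u - α₃)) + 1 * 1 * ((u - α₂) * (u - α₃) + (u - α₁) * (u - α₃) + (u - α₁) * (u - α₂))) * (p ^ 2) * (u - v) - 1 * ((u - α₁) * (u - α₂) * (u - α₃)) * (p ^ 2) * 1)
        + ((k₁ : ℝ) ^ 2) * ((0 * ((v - α₁) * (v - α₂) * (v - α₃)) + 1 * 0 * ((v - α₂) * (v - α₃) + (v - α₁) * (v - α₃) + (v - α₁) * (v - α₂))) * (q ^ 2) * (v - u) - 1 * ((v - α₁) * (v - α₂) * (v - α₃)) * (q ^ 2) * (-1))) / (((k₁ : ℝ) ^ 2) * ((k₂ : ℝ) ^ 2) * (u - v) ^ 2) := by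
    field_simp
    ring
  have hfunF2 : (fun t : ℝ => (fun z : ℝ × ℝ × ℝ × ℝ => (z.1 - α₁) * (z.1 - α₂) * (z.1 - α₃) * z.2.2.1 ^ 2 / ((k₁ : ℝ) ^ 2 * (z.1 - z.2.1)) + (z.2.1 - α₁) * (z.2.1 - α₂) * (z.2.1 - α₃) * z.2.2.2 ^ 2 / ((k₂ : ℝ) ^ 2 * (z.2.1 - z.1))) ((u, v, p, q) + t • ((0:ℝ), (1:ℝ), (0:ℝ), (0:ℝ)))) = (fun t : ℝ =>
      (1 + 0 * t) * (((u + 0 * t) - α₁) * ((u + 0 * t) - α₂) * ((u + 0 * t) - α₃)) * (p ^ 2) / (((k₁ : ℝ) ^ 2) * ((u - v) + (-1) * t))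
      + (1 + 0 * t) * (((v + 1 * t) - α₁) * ((v + 1 * t) - α₂) * ((v + 1 * t) - α₃)) * (q ^ 2) / (((k₂ : ℝ) ^ 2) * ((v - u) + 1 * t))) := by
    funext t
    simp only [Prod.smul_mk, Prod.mk_add_mk, smul_eq_mul]
    ring
  have HF2 := (master 1 0 u 0 (p ^ 2) ((k₁ : ℝ) ^ 2) (u - v) (-1) α₁ α₂ α₃ hk1sq huv).add
    (master 1 0 v 1 (q ^ 2) ((k₂ : ℝ) ^ 2) (v - u) 1 α₁ α₂ α₃ hk2sq hvu)
  have vF2 : ((0 * ((u - α₁) * (u - α₂) * (u - α₃)) + 1 * 0 * ((u - α₂) * (u - α₃) + (u - α₁) * (u - α₃) + (u - α₁) * (u - α₂))) * (p ^ 2) * (u - v) - 1 * ((u - α₁) * (u - α₂) * (u - α₃)) * (p ^ 2) * (-1)) / (((k₁ : ℝ) ^ 2) * (u - v) ^ 2)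
      + ((0 * ((v - α₁) * (v - α₂) * (v - α₃)) + 1 * 1 * ((v - α₂) * (v - α₃) + (v - α₁) * (v - α₃) + (v - α₁) * (v - α₂))) * (q ^ 2) * (v - u) - 1 * ((v - α₁) * (v - α₂) * (v - α₃)) * (q ^ 2) * 1) / (((k₂ : ℝ) ^ 2) * (v - u) ^ 2)
      = (((k₂ : ℝ) ^ 2) * ((0 * ((u - α₁) * (u - α₂) * (u - α₃)) + 1 * 0 * ((u - α₂) * (u - α₃) + (u - α₁) * (u - α₃) + (u - α₁) * (u - α₂))) * (p ^ 2) * (u - v) - 1 * ((u - α₁) * (u - α₂) * (u - α₃)) * (p ^ 2) * (-1))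
        + ((k₁ : ℝ) ^ 2) * ((0 * ((v - α₁) * (v - α₂) * (v - α₃)) + 1 * 1 * ((v - α₂) * (v - α₃) + (v - α₁) * (v - α₃) + (v - α₁) * (v - α₂))) * (q ^ 2) * (v - u) - 1 * ((v - α₁) * (v - α₂) * (v - α₃)) * (q ^ 2) * 1)) / (((k₁ : ℝ) ^ 2) * ((k₂ : ℝ) ^ 2) * (u - v) ^ 2) := by
    field_simp
    ring
  have hfunF3 : (fun t : ℝ => (fun z : ℝ × ℝ × ℝ × ℝ => (z.1 - α₁) * (z.1 - α₂) * (z.1 - α₃) * z.2.2.1 ^ 2 / ((k₁ : ℝ) ^ 2 * (z.1 - z.2.1)) + (z.2.1 - α₁) * (z.2.1 - α₂) * (z.2.1 - α₃) * z.2.2.2 ^ 2 / ((k₂ : ℝ) ^ 2 * (z.2.1 - z.1))) ((u, v, p, q) + t • ((0:ℝ), (0:ℝ), (1:ℝ), (0:ℝ)))) = (fun t : ℝ =>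
      ((u - α₁) * (u - α₂) * (u - α₃)) * (p + 1 * t) ^ 2 / (((k₁ : ℝ) ^ 2) * (u - v))
      + ((v - α₁) * (v - α₂) * (v - α₃)) * (q + 0 * t) ^ 2 / (((k₂ : ℝ) ^ 2) * (v - u))) := by
    funext t
    simp only [Prod.smul_mk, Prod.mk_add_mk, smul_eq_mul]
    ring
  have HF3 := (master2 ((u - α₁) * (u - α₂) * (u - α₃)) p 1 ((k₁ : ℝ) ^ 2) (u - v)).add
    (master2 ((v - α₁) * (v - α₂) * (v - α₃)) q 0 ((k₂ : ℝ) ^ 2) (v - u))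
  have vF3 : ((u - α₁) * (u - α₂) * (u - α₃)) * (2 * p * 1) / (((k₁ : ℝ) ^ 2) * (u - v))
      + ((v - α₁) * (v - α₂) * (v - α₃)) * (2 * q * 0) / (((k₂ : ℝ) ^ 2) * (v - u))
      = (2 * ((u - α₁) * (u - α₂) * (u - α₃)) * p * 1 * ((k₂ : ℝ) ^ 2) * (u - v)
        + 2 * ((v - α₁) * (v - α₂) * (v - α₃)) * q * 0 * ((k₁ : ℝ) ^ 2) * (v - u)) / (((k₁ : ℝ) ^ 2) * ((k₂ : ℝ) ^ 2) * (u - v) ^ 2) := by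
    field_simp
    ring
  have hfunF4 : (fun t : ℝ => (fun z : ℝ × ℝ × ℝ × ℝ => (z.1 - α₁) * (z.1 - α₂) * (z.1 - α₃) * z.2.2.1 ^ 2 / ((k₁ : ℝ) ^ 2 * (z.1 - z.2.1)) + (z.2.1 - α₁) * (z.2.1 - α₂) * (z.2.1 - α₃) * z.2.2.2 ^ 2 / ((k₂ : ℝ) ^ 2 * (z.2.1 - z.1))) ((u, v, p, q) + t • ((0:ℝ), (0:ℝ), (0:ℝ), (1:ℝ)))) = (fun t : ℝ =>
      ((u - α₁) * (u - α₂) * (u - α₃)) * (p + 0 * t) ^ 2 / (((k₁ : ℝ) ^ 2) * (u - v))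
      + ((v - α₁) * (v - α₂) * (v - α₃)) * (q + 1 * t) ^ 2 / (((k₂ : ℝ) ^ 2) * (v - u))) := by
    funext t
    simp only [Prod.smul_mk, Prod.mk_add_mk, smul_eq_mul]
    ring
  have HF4 := (master2 ((u - α₁) * (u - α₂) * (u - α₃)) p 0 ((k₁ : ℝ) ^ 2) (u - v)).add
    (master2 ((v - α₁) * (v - α₂) * (v - α₃)) q 1 ((k₂ : ℝ) ^ 2) (v - u))
  have vF4 : ((u - α₁) * (u - α₂) * (u - α₃)) * (2 * p * 0) / (((k₁ : ℝ) ^ 2) * (u - v))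
      + ((v - α₁) * (v - α₂) * (v - α₃)) * (2 * q * 1) / (((k₂ : ℝ) ^ 2) * (v - u))
      = (2 * ((u - α₁) * (u - α₂) * (u - α₃)) * p * 0 * ((k₂ : ℝ) ^ 2) * (u - v)
        + 2 * ((v - α₁) * (v - α₂) * (v - α₃)) * q * 1 * ((k₁ : ℝ) ^ 2) * (v - u)) / (((k₁ : ℝ) ^ 2) * ((k₂ : ℝ) ^ 2) * (u - v) ^ 2) := by
    field_simp
    ring
  have hfunG1 : (fun t : ℝ => (fun z : ℝ × ℝ × ℝ × ℝ => z.2.1 * ((z.1 - α₁) * (z.1 - α₂) * (z.1 - α₃)) * z.2.2.1 ^ 2 / ((k₁ : ℝ) ^ 2 * (z.2.1 - z.1)) + z.1 * ((z.2.1 - α₁) * (z.2.1 - α₂) * (z.2.1 - α₃)) * z.2.2.2 ^ 2 / ((k₂ : ℝ) ^ 2 * (z.1 - z.2.1))) ((u, v, p, q) + t • ((1:ℝ), (0:ℝ), (0:ℝ), (0:ℝ)))) = (fun t : ℝ =>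
      (v + 0 * t) * (((u + 1 * t) - α₁) * ((u + 1 * t) - α₂) * ((u + 1 * t) - α₃)) * (p ^ 2) / (((k₁ : ℝ) ^ 2) * ((v - u) + (-1) * t))
      + (u + 1 * t) * (((v + 0 * t) - α₁) * ((v + 0 * t) - α₂) * ((v + 0 * t) - α₃)) * (q ^ 2) / (((k₂ : ℝ) ^ 2) * ((u - v) + 1 * t))) := by
    funext t
    simp only [Prod.smul_mk, Prod.mk_add_mk, smul_eq_mul]
    ring
  have HG1 := (master v 0 u 1 (p ^ 2) ((k₁ : ℝ) ^ 2) (v - u) (-1) α₁ α₂ α₃ hk1sq hvu).add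
    (master u 1 v 0 (q ^ 2) ((k₂ : ℝ) ^ 2) (u - v) 1 α₁ α₂ α₃ hk2sq huv)
  have vG1 : ((0 * ((u - α₁) * (u - α₂) * (u - α₃)) + v * 1 * ((u - α₂) * (u - α₃) + (u - α₁) * (u - α₃) + (u - α₁) * (u - α₂))) * (p ^ 2) * (v - u) - v * ((u - α₁) * (u - α₂) * (u - α₃)) * (p ^ 2) * (-1)) / (((k₁ : ℝ) ^ 2) * (v - u) ^ 2)
      + ((1 * ((v - α₁) * (v - α₂) * (v - α₃)) + u * 0 * ((v - α₂) * (v - α₃) + (v - α₁) * (v - α₃) + (v - α₁) * (v - α₂))) * (q ^ 2) * (u - v) - u * ((v - α₁) * (v - α₂) * (v - α₃)) * (q ^ 2) * 1) / (((k₂ : ℝ) ^ 2) * (u - v) ^ 2)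
      = (((k₂ : ℝ) ^ 2) * ((0 * ((u - α₁) * (u - α₂) * (u - α₃)) + v * 1 * ((u - α₂) * (u - α₃) + (u - α₁) * (u - α₃) + (u - α₁) * (u - α₂))) * (p ^ 2) * (v - u) - v * ((u - α₁) * (u - α₂) * (u - α₃)) * (p ^ 2) * (-1))
        + ((k₁ : ℝ) ^ 2) * ((1 * ((v - α₁) * (v - α₂) * (v - α₃)) + u * 0 * ((v - α₂) * (v - α₃) + (v - α₁) * (v - α₃) + (v - α₁) * (v - α₂))) * (q ^ 2) * (u - v) - u * ((v - α₁) * (v - α₂) * (v - α₃)) * (q ^ 2) * 1)) / (((k₁ : ℝ) ^ 2) * ((k₂ : ℝ) ^ 2) * (u - v) ^ 2) := by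
    field_simp
    ring
  have hfunG2 : (fun t : ℝ => (fun z : ℝ × ℝ × ℝ × ℝ => z.2.1 * ((z.1 - α₁) * (z.1 - α₂) * (z.1 - α₃)) * z.2.2.1 ^ 2 / ((k₁ : ℝ) ^ 2 * (z.2.1 - z.1)) + z.1 * ((z.2.1 - α₁) * (z.2.1 - α₂) * (z.2.1 - α₃)) * z.2.2.2 ^ 2 / ((k₂ : ℝ) ^ 2 * (z.1 - z.2.1))) ((u, v, p, q) + t • ((0:ℝ), (1:ℝ), (0:ℝ), (0:ℝ)))) = (fun t : ℝ =>
      (v + 1 * t) * (((u + 0 * t) - α₁) * ((u + 0 * t) - α₂) * ((u + 0 * t) - α₃)) * (p ^ 2) / (((k₁ : ℝ) ^ 2) * ((v - u) + 1 * t))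
      + (u + 0 * t) * (((v + 1 * t) - α₁) * ((v + 1 * t) - α₂) * ((v + 1 * t) - α₃)) * (q ^ 2) / (((k₂ : ℝ) ^ 2) * ((u - v) + (-1) * t))) := by
    funext t
    simp only [Prod.smul_mk, Prod.mk_add_mk, smul_eq_mul]
    ring
  have HG2 := (master v 1 u 0 (p ^ 2) ((k₁ : ℝ) ^ 2) (v - u) 1 α₁ α₂ α₃ hk1sq hvu).add
    (master u 0 v 1 (q ^ 2) ((k₂ : ℝ) ^ 2) (u - v) (-1) α₁ α₂ α₃ hk2sq huv)
  have vG2 : ((1 * ((u - α₁) * (u - α₂) * (u - α₃)) + v * 0 * ((u - α₂) * (u - α₃) + (u - α₁) * (u - α₃) + (u - α₁) * (u - α₂))) * (p ^ 2) * (v - u) - v * ((u - α₁) * (u - α₂) * (u - α₃)) * (p ^ 2) * 1) / (((k₁ : ℝ) ^ 2) * (v - u) ^ 2)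
      + ((0 * ((v - α₁) * (v - α₂) * (v - α₃)) + u * 1 * ((v - α₂) * (v - α₃) + (v - α₁) * (v - α₃) + (v - α₁) * (v - α₂))) * (q ^ 2) * (u - v) - u * ((v - α₁) * (v - α₂) * (v - α₃)) * (q ^ 2) * (-1)) / (((k₂ : ℝ) ^ 2) * (u - v) ^ 2)
      = (((k₂ : ℝ) ^ 2) * ((1 * ((u - α₁) * (u - α₂) * (u - α₃)) + v * 0 * ((u - α₂) * (u - α₃) + (u - α₁) * (u - α₃) + (u - α₁) * (u - α₂))) * (p ^ 2) * (v - u) - v * ((u - α₁) * (u - α₂) * (u - α₃)) * (p ^ 2) * 1)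
        + ((k₁ : ℝ) ^ 2) * ((0 * ((v - α₁) * (v - α₂) * (v - α₃)) + u * 1 * ((v - α₂) * (v - α₃) + (v - α₁) * (v - α₃) + (v - α₁) * (v - α₂))) * (q ^ 2) * (u - v) - u * ((v - α₁) * (v - α₂) * (v - α₃)) * (q ^ 2) * (-1))) / (((k₁ : ℝ) ^ 2) * ((k₂ : ℝ) ^ 2) * (u - v) ^ 2) := by
    field_simp
    ring
  have hfunG3 : (fun t : ℝ => (fun z : ℝ × ℝ × ℝ × ℝ => z.2.1 * ((z.1 - α₁) * (z.1 - α₂) * (z.1 - α₃)) * z.2.2.1 ^ 2 / ((k₁ : ℝ) ^ 2 * (z.2.1 - z.1)) + z.1 * ((z.2.1 - α₁) * (z.2.1 - α₂) * (z.2.1 - α₃)) * z.2.2.2 ^ 2 / ((k₂ : ℝ) ^ 2 * (z.1 - z.2.1))) ((u, v, p, q) + t • ((0:ℝ), (0:ℝ), (1:ℝ), (0:ℝ)))) = (fun t : ℝ =>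
      (v * ((u - α₁) * (u - α₂) * (u - α₃))) * (p + 1 * t) ^ 2 / (((k₁ : ℝ) ^ 2) * (v - u))
      + (u * ((v - α₁) * (v - α₂) * (v - α₃))) * (q + 0 * t) ^ 2 / (((k₂ : ℝ) ^ 2) * (u - v))) := by
    funext t
    simp only [Prod.smul_mk, Prod.mk_add_mk, smul_eq_mul]
    ring
  have HG3 := (master2 (v * ((u - α₁) * (u - α₂) * (u - α₃))) p 1 ((k₁ : ℝ) ^ 2) (v - u)).add
    (master2 (u * ((v - α₁) * (v - α₂) * (v - α₃))) q 0 ((k₂ : ℝ) ^ 2) (u - v))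
  have vG3 : (v * ((u - α₁) * (u - α₂) * (u - α₃))) * (2 * p * 1) / (((k₁ : ℝ) ^ 2) * (v - u))
      + (u * ((v - α₁) * (v - α₂) * (v - α₃))) * (2 * q * 0) / (((k₂ : ℝ) ^ 2) * (u - v))
      = (2 * (v * ((u - α₁) * (u - α₂) * (u - α₃))) * p * 1 * ((k₂ : ℝ) ^ 2) * (v - u)
        + 2 * (u * ((v - α₁) * (v - α₂) * (v - α₃))) * q * 0 * ((k₁ : ℝ) ^ 2) * (u - v)) / (((k₁ : ℝ) ^ 2) * ((k₂ : ℝ) ^ 2) * (u - v) ^ 2) := by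
    field_simp
    ring
  have hfunG4 : (fun t : ℝ => (fun z : ℝ × ℝ × ℝ × ℝ => z.2.1 * ((z.1 - α₁) * (z.1 - α₂) * (z.1 - α₃)) * z.2.2.1 ^ 2 / ((k₁ : ℝ) ^ 2 * (z.2.1 - z.1)) + z.1 * ((z.2.1 - α₁) * (z.2.1 - α₂) * (z.2.1 - α₃)) * z.2.2.2 ^ 2 / ((k₂ : ℝ) ^ 2 * (z.1 - z.2.1))) ((u, v, p, q) + t • ((0:ℝ), (0:ℝ), (0:ℝ), (1:ℝ)))) = (fun t : ℝ =>
      (v * ((u - α₁) * (u - α₂) * (u - α₃))) * (p + 0 * t) ^ 2 / (((k₁ : ℝ) ^ 2) * (v - u))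
      + (u * ((v - α₁) * (v - α₂) * (v - α₃))) * (q + 1 * t) ^ 2 / (((k₂ : ℝ) ^ 2) * (u - v))) := by
    funext t
    simp only [Prod.smul_mk, Prod.mk_add_mk, smul_eq_mul]
    ring
  have HG4 := (master2 (v * ((u - α₁) * (u - α₂) * (u - α₃))) p 0 ((k₁ : ℝ) ^ 2) (v - u)).add
    (master2 (u * ((v - α₁) * (v - α₂) * (v - α₃))) q 1 ((k₂ : ℝ) ^ 2) (u - v))
  have vG4 : (v * ((u - α₁) * (u - α₂) * (u - α₃))) * (2 * p * 0) / (((k₁ : ℝ) ^ 2) * (v - u))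
      + (u * ((v - α₁) * (v - α₂) * (v - α₃))) * (2 * q * 1) / (((k₂ : ℝ) ^ 2) * (u - v))
      = (2 * (v * ((u - α₁) * (u - α₂) * (u - α₃))) * p * 0 * ((k₂ : ℝ) ^ 2) * (v - u)
        + 2 * (u * ((v - α₁) * (v - α₂) * (v - α₃))) * q * 1 * ((k₁ : ℝ) ^ 2) * (u - v)) / (((k₁ : ℝ) ^ 2) * ((k₂ : ℝ) ^ 2) * (u - v) ^ 2) := by
    field_simp
    ring
  unfold pb
  rw [fderiv_dir _ _ _ hFd, fderiv_dir _ _ _ hFd, fderiv_dir _ _ _ hFd, fderiv_dir _ _ _ hFd,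
      fderiv_dir _ _ _ hGd, fderiv_dir _ _ _ hGd, fderiv_dir _ _ _ hGd, fderiv_dir _ _ _ hGd]
  simp only [Pi.add_def] at HF1 HF2 HF3 HF4 HG1 HG2 HG3 HG4
  simp only [hfunF1, hfunF2, hfunF3, hfunF4, hfunG1, hfunG2, hfunG3, hfunG4,
    HF1.deriv, HF2.deriv, HF3.deriv, HF4.deriv, HG1.deriv, HG2.deriv, HG3.deriv, HG4.deriv,
    vF1, vF2, vF3, vF4, vG1, vG2, vG3, vG4]
  rw [div_mul_div_comm, div_mul_div_comm, div_mul_div_comm, div_mul_div_comm,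
      div_sub_div_same, ← add_div, div_sub_div_same, div_eq_zero_iff]
  left
  ring
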